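/- Suppose there exists a vector v ∈ S⊥ with all components positive. If for some c > 0 the image of F_c equals C° (i.e., F_c is surjective onto C°), then there exists a vector ṽ ∈ S̃⊥ with all components positive. -/

import Mathlib

open scoped BigOperators

noncomputable section

/-- The generalized exponential map `F_c(x) = ∑ i, c_i exp(w̃^i · x) w^i`. -/
def Fmap {d dt n : ℕ} (W : Matrix (Fin d) (Fin n) ℝ) (Wt : Matrix (Fin dt) (Fin n) ℝ)
    (c : Fin n → ℝ) (x : Fin dt → ℝ) : Fin d → ℝ :=
  fun i => ∑ j, c j * Real.exp (∑ k, Wt k j * x k) * W i j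

/-- The polyhedral cone generated by the columns of `W`. -/
def coneOf {d n : ℕ} (W : Matrix (Fin d) (Fin n) ℝ) : Set (Fin d → ℝ) :=
  {y | ∃ u : Fin n → ℝ, (∀ j, 0 ≤ u j) ∧ y = fun i => ∑ j, u j * W i j}

/-- The componentwise sign vector. -/
def signVec {n : ℕ} (x : Fin n → ℝ) : Fin n → SignType := fun i => SignType.sign (x i)

/-- The set of sign vectors of a set of real vectors. -/
def signSet {n : ℕ} (T : Set (Fin n → ℝ)) : Set (Fin n → SignType) := signVec '' T

/-- The kernel of (the linear map given by) a matrix, as a set. -/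
def kerSet {d n : ℕ} (W : Matrix (Fin d) (Fin n) ℝ) : Set (Fin n → ℝ) :=
  {x | W.mulVec x = 0}

/-- The orthogonal complement (w.r.t. the standard inner product) of a set in `ℝ^n`. -/
def orthSet {n : ℕ} (T : Set (Fin n → ℝ)) : Set (Fin n → ℝ) :=
  {v | ∀ u ∈ T, ∑ i, u i * v i = 0}

/-- if `S⊥` contains a strictly positive vector and for some `c > 0` the
image of `F_c` equals the interior of `C`, then `S̃⊥` contains a strictly positive
vector as well. -/
theorem stmt11 {d n : ℕ} (hd : 1 ≤ d) (hdn : d ≤ n)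
    (W Wt : Matrix (Fin d) (Fin n) ℝ) (hW : W.rank = d) (hWt : Wt.rank = d)
    (hv : ∃ v ∈ orthSet (kerSet W), ∀ i, 0 < v i)
    (c : Fin n → ℝ) (hc : ∀ j, 0 < c j)
    (hsurj : Set.range (Fmap W Wt c) = interior (coneOf W)) :
    ∃ vt ∈ orthSet (kerSet Wt), ∀ i, 0 < vt i := by
  obtain ⟨v, hvS, hvpos⟩ := hv
  have hn : 0 < n := lt_of_lt_of_le hd hdn
  haveI : Nonempty (Fin n) := ⟨⟨0, hn⟩⟩
  -- surjectivity of mulVecLin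
  have hrange : LinearMap.range W.mulVecLin = ⊤ := by
    apply Submodule.eq_top_of_finrank_eq
    rw [show Module.finrank ℝ ↥(LinearMap.range W.mulVecLin) = W.rank from rfl, hW,
      Module.finrank_fin_fun]
  have hLsurj : Function.Surjective W.mulVecLin := LinearMap.range_eq_top.mp hrange
  set L := LinearMap.toContinuousLinearMap (W.mulVecLin) with hL
  have hLsurj' : Function.Surjective L := hLsurj
  have hopen : IsOpenMap L := L.isOpenMap hLsurj'
  have hPopen : IsOpen {a : Fin n → ℝ | ∀ j, 0 < a j} := by
    have : {a : Fin n → ℝ | ∀ j, 0 < a j} = ⋂ j, {a | 0 < a j} := by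
      ext a; simp [Set.mem_iInter]
    rw [this]
    exact isOpen_iInter_of_finite fun j => isOpen_lt continuous_const (continuous_apply j)
  have himg : L '' {a : Fin n → ℝ | ∀ j, 0 < a j} ⊆ coneOf W := by
    rintro _ ⟨a, ha, rfl⟩
    refine ⟨a, fun j => (ha j).le, ?_⟩
    funext i
    show (W.mulVec a) i = _
    simp only [Matrix.mulVec, dotProduct]
    exact Finset.sum_congr rfl fun j _ => mul_comm _ _
  -- choice of ε
  set V : ℝ := ∑ j, c j * v j with hVdef
  have hVpos : 0 < V := Finset.sum_pos (fun j _ => mul_pos (hc j) (hvpos j)) Finset.univ_nonempty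
  set m : ℝ := Finset.univ.inf' Finset.univ_nonempty (fun j => c j * v j) with hmdef
  have hmpos : 0 < m := by
    rw [hmdef, Finset.lt_inf'_iff]
    exact fun j _ => mul_pos (hc j) (hvpos j)
  have hm_le : ∀ i, m ≤ c i * v i := fun i => Finset.inf'_le _ (Finset.mem_univ i)
  set ε : ℝ := m / (2 * V) with hεdef
  have hεpos : 0 < ε := div_pos hmpos (by positivity)
  have hεV : ε * V < m := by
    rw [hεdef, div_mul_eq_mul_div, mul_comm (2 : ℝ) V, ← div_div,
      mul_div_assoc, div_self hVpos.ne', mul_one]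
    linarith
  -- the target point
  set y : Fin d → ℝ := fun i => ∑ j, (ε * c j) * W i j with hydef
  have hyL : L (fun j => ε * c j) = y := by
    funext i
    show (W.mulVec fun j => ε * c j) i = _
    simp only [Matrix.mulVec, dotProduct, hydef]
    exact Finset.sum_congr rfl fun j _ => mul_comm _ _
  have hyint : y ∈ interior (coneOf W) := by
    apply interior_maximal himg (hopen _ hPopen)
    exact ⟨fun j => ε * c j, fun j => mul_pos hεpos (hc j), hyL⟩
  rw [← hsurj] at hyint
  obtain ⟨x, hx⟩ := hyint
  set θ : Fin n → ℝ := fun j => ∑ k, Wt k j * x k with hθdef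
  -- kernel element
  have hker : (fun j => c j * Real.exp (θ j) - ε * c j) ∈ kerSet W := by
    show W.mulVec _ = 0
    funext i
    have h1 : Fmap W Wt c x i = y i := congrFun hx i
    simp only [Fmap, hydef] at h1
    simp only [Matrix.mulVec, dotProduct, Pi.zero_apply]
    calc ∑ j, W i j * (c j * Real.exp (θ j) - ε * c j)
        = ∑ j, (c j * Real.exp (θ j) * W i j - (ε * c j) * W i j) := by
          exact Finset.sum_congr rfl fun j _ => by ring
      _ = (∑ j, c j * Real.exp (θ j) * W i j) - ∑ j, (ε * c j) * W i j :=
          Finset.sum_sub_distrib _ _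
      _ = 0 := by rw [show (∑ j, c j * Real.exp (θ j) * W i j) = ∑ j, (ε * c j) * W i j from h1]; ring
  have horth := hvS _ hker
  have hsum : ∑ j, c j * Real.exp (θ j) * v j = ε * V := by
    have : (∑ j, c j * Real.exp (θ j) * v j) - ∑ j, ε * (c j * v j) = 0 := by
      rw [← Finset.sum_sub_distrib]
      rw [← horth]
      exact Finset.sum_congr rfl fun j _ => by ring
    rw [hVdef, Finset.mul_sum]
    linarith [this]
  have hθneg : ∀ i, θ i < 0 := by
    intro i
    have hle : c i * Real.exp (θ i) * v i ≤ ε * V := by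
      rw [← hsum]
      exact Finset.single_le_sum (f := fun j => c j * Real.exp (θ j) * v j)
        (fun j _ => (mul_pos (mul_pos (hc j) (Real.exp_pos _)) (hvpos j)).le) (Finset.mem_univ i)
    have hlt : c i * Real.exp (θ i) * v i < c i * v i :=
      lt_of_le_of_lt hle (lt_of_lt_of_le hεV (hm_le i))
    have hexp : Real.exp (θ i) < 1 := by
      nlinarith [mul_pos (hc i) (hvpos i), Real.exp_pos (θ i)]
    exact Real.exp_lt_one_iff.mp hexp
  refine ⟨fun j => -θ j, ?_, fun i => neg_pos.mpr (hθneg i)⟩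
  intro u hu
  have hu' : ∀ k, ∑ j, Wt k j * u j = 0 := by
    intro k
    have := congrFun hu k
    simpa [Matrix.mulVec, dotProduct] using this
  calc ∑ j, u j * (-θ j)
      = ∑ j, ∑ k, Wt k j * u j * (-(x k)) := Finset.sum_congr rfl fun j _ => by
        simp only [hθdef]
        rw [mul_neg, Finset.mul_sum, ← Finset.sum_neg_distrib]
        exact Finset.sum_congr rfl fun k _ => by ring
    _ = ∑ k, ∑ j, Wt k j * u j * (-(x k)) := Finset.sum_comm
    _ = ∑ k, (∑ j, Wt k j * u j) * (-(x k)) :=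
        Finset.sum_congr rfl fun k _ => (Finset.sum_mul _ _ _).symm
    _ = 0 := by simp [hu']
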